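/- Let n = p0+p1+p2+p3+p4-3 and let A be the Batyrev matrix determined by integers p0,p1,p2,p3,p4 ≥ 1 and nonnegative integers b_1,…,b_{p3}, c_2,…,c_{p2}. Suppose h, h' ∈ ℤ^{n+3} each satisfy the five convexity inequalities for A. Then the pair (P(A,h), P(A,h')) has the integer decomposition property: (P(A,h) ∩ ℤ^n) + (P(A,h') ∩ ℤ^n) = (P(A,h) + P(A,h')) ∩ ℤ^n. -/

import Mathlib

open Finset Pointwise

/-- Column index type for the Batyrev matrix:
left part `S = {v₁,…,v_{p0}, u₂,…,u_{p4}, y₂,…,y_{p1}}`,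
right part `J = {t₁,…,t_{p3}, z₂,…,z_{p2}}`. -/
abbrev BCol (p0 p1 p2 p3 p4 : ℕ) :=
  (Fin p0 ⊕ (Fin (p4 - 1) ⊕ Fin (p1 - 1))) ⊕ (Fin p3 ⊕ Fin (p2 - 1))

/-- Row index type: `v₁,…,v_{p0}`, `u₁,…,u_{p4}` (index 0 is u₁),
`y₁,…,y_{p1}` (index 0 is y₁), `t₁,…,t_{p3}`, `z₁,…,z_{p2}` (index 0 is z₁). -/
abbrev BRow (p0 p1 p2 p3 p4 : ℕ) :=
  Fin p0 ⊕ (Fin p4 ⊕ (Fin p1 ⊕ (Fin p3 ⊕ Fin p2)))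

/-- The Batyrev matrix. -/
def batyrevA (p0 p1 p2 p3 p4 : ℕ) (b : Fin p3 → ℤ) (c : Fin (p2 - 1) → ℤ) :
    BRow p0 p1 p2 p3 p4 → BCol p0 p1 p2 p3 p4 → ℤ
  | .inl i, .inl (.inl i') => if (i : ℕ) = (i' : ℕ) then 1 else 0
  | .inl _, _ => 0
  | .inr (.inl j), .inl (.inl _) => if (j : ℕ) = 0 then -1 else 0
  | .inr (.inl j), .inl (.inr (.inl j')) =>
      if (j : ℕ) = 0 then -1 else if (j : ℕ) = (j' : ℕ) + 1 then 1 else 0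
  | .inr (.inl _), .inl (.inr (.inr _)) => 0
  | .inr (.inl j), .inr (.inl i) => if (j : ℕ) = 0 then b i else 0
  | .inr (.inl j), .inr (.inr k) => if (j : ℕ) = 0 then c k else 0
  | .inr (.inr (.inl j)), .inl (.inl _) => if (j : ℕ) = 0 then -1 else 0
  | .inr (.inr (.inl _)), .inl (.inr (.inl _)) => 0
  | .inr (.inr (.inl j)), .inl (.inr (.inr j')) =>
      if (j : ℕ) = 0 then -1 else if (j : ℕ) = (j' : ℕ) + 1 then 1 else 0
  | .inr (.inr (.inl j)), .inr (.inl i) => if (j : ℕ) = 0 then b i + 1 else 0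
  | .inr (.inr (.inl j)), .inr (.inr k) => if (j : ℕ) = 0 then c k else 0
  | .inr (.inr (.inr (.inl i))), .inr (.inl i') => if (i : ℕ) = (i' : ℕ) then 1 else 0
  | .inr (.inr (.inr (.inl _))), _ => 0
  | .inr (.inr (.inr (.inr j))), .inr (.inl _) => if (j : ℕ) = 0 then -1 else 0
  | .inr (.inr (.inr (.inr j))), .inr (.inr j') =>
      if (j : ℕ) = 0 then -1 else if (j : ℕ) = (j' : ℕ) + 1 then 1 else 0
  | .inr (.inr (.inr (.inr _))), .inl _ => 0

/-- The normalized height vector `h(d,e,f)`: entry `d` at `v₁`, `f` at `u₁`,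
`e+f` at `z₁`, and `0` elsewhere. -/
def batyrevH (p0 p1 p2 p3 p4 : ℕ) (d e f : ℤ) : BRow p0 p1 p2 p3 p4 → ℤ
  | .inl i => if (i : ℕ) = 0 then d else 0
  | .inr (.inl j) => if (j : ℕ) = 0 then f else 0
  | .inr (.inr (.inr (.inr j))) => if (j : ℕ) = 0 then e + f else 0
  | _ => 0

/-- `P(A,h) = {x ∈ ℝⁿ : (Ax)ᵢ ≥ -hᵢ}`. -/
def polyP {ι κ : Type*} [Fintype κ] (A : ι → κ → ℤ) (h : ι → ℤ) : Set (κ → ℝ) :=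
  {x | ∀ i, -(h i : ℝ) ≤ ∑ j, (A i j : ℝ) * x j}

/-- The set of integral points of `ℝ^κ`. -/
def intZ {κ : Type*} : Set (κ → ℝ) := {x | ∀ j, ∃ k : ℤ, x j = (k : ℝ)}

/-- Embedding `Fin (n-1) → Fin n`, `k ↦ k+1` (so index `k` of `c₂,…,c_{p2}`
corresponds to ray `z_{k+2}`, i.e. index `k+1` among `z₁,…,z_{p2}`). -/
def embSucc {n : ℕ} (k : Fin (n - 1)) : Fin n :=
  ⟨(k : ℕ) + 1, by have := k.isLt; omega⟩

/-- The five convexity inequalities for a height vector `h` on the Batyrev fan. -/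
def batyrevConvex (p0 p1 p2 p3 p4 : ℕ) (b : Fin p3 → ℤ) (c : Fin (p2 - 1) → ℤ)
    (h : BRow p0 p1 p2 p3 p4 → ℤ) : Prop :=
  ((∑ i, h (.inl i)) + (∑ j, h (.inr (.inr (.inl j)))) ≥
      (∑ k, c k * h (.inr (.inr (.inr (.inr (embSucc k)))))) +
        (∑ i, (b i + 1) * h (.inr (.inr (.inr (.inl i)))))) ∧
  ((∑ j, h (.inr (.inr (.inl j)))) + (∑ j, h (.inr (.inr (.inr (.inr j))))) ≥
      ∑ j, h (.inr (.inl j))) ∧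
  ((∑ j, h (.inr (.inr (.inr (.inr j))))) + (∑ i, h (.inr (.inr (.inr (.inl i))))) ≥ 0) ∧
  ((∑ i, h (.inr (.inr (.inr (.inl i))))) + (∑ j, h (.inr (.inl j))) ≥
      ∑ j, h (.inr (.inr (.inl j)))) ∧
  ((∑ j, h (.inr (.inl j))) + (∑ i, h (.inl i)) ≥
      (∑ k, c k * h (.inr (.inr (.inr (.inr (embSucc k)))))) +
        (∑ i, b i * h (.inr (.inr (.inr (.inl i))))))

/-! ### Auxiliary lemmas -/

section Aux

lemma sum_fin_pos {n : ℕ} (hn : 1 ≤ n) (f : Fin n → ℤ) :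
    ∑ j, f j = f ⟨0, hn⟩ + ∑ k : Fin (n - 1), f (embSucc k) := by
  obtain ⟨m, rfl⟩ : ∃ m, n = m + 1 := ⟨n - 1, by omega⟩
  rw [Fin.sum_univ_succ]
  rfl

lemma exists_split_on {ι : Type*} [DecidableEq ι] (A : Finset ι) :
    ∀ (T : ι → ℤ), (∀ i ∈ A, 0 ≤ T i) → ∀ s : ℤ, 0 ≤ s → s ≤ ∑ i ∈ A, T i →
    ∃ T1 : ι → ℤ, (∀ i, 0 ≤ T1 i) ∧ (∀ i ∈ A, T1 i ≤ T i) ∧ ∑ i ∈ A, T1 i = s := by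
  induction A using Finset.induction_on with
  | empty =>
    intro T _ s hs0 hs1
    simp only [Finset.sum_empty] at hs1 ⊢
    exact ⟨0, by simp, by simp, by omega⟩
  | insert _ _ ha ih =>
    rename_i a A
    intro T hT s hs0 hs1
    rw [Finset.sum_insert ha] at hs1
    have hTa : 0 ≤ T a := hT a (Finset.mem_insert_self a A)
    have hsum : 0 ≤ ∑ i ∈ A, T i :=
      Finset.sum_nonneg fun i hi => hT i (Finset.mem_insert_of_mem hi)
    set s1 := min s (T a) with hs1def
    obtain ⟨T1, hT1a, hT1b, hT1c⟩ := ih T (fun i hi => hT i (Finset.mem_insert_of_mem hi))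
      (s - s1) (by omega) (by omega)
    refine ⟨Function.update T1 a s1, ?_, ?_, ?_⟩
    · intro i
      rcases eq_or_ne i a with rfl | hne
      · simp; omega
      · simp [Function.update_of_ne hne]; exact hT1a i
    · intro i hi
      rcases eq_or_ne i a with rfl | hne
      · simp; omega
      · rw [Function.update_of_ne hne]
        exact hT1b i (Finset.mem_of_mem_insert_of_ne hi hne)
    · rw [Finset.sum_insert ha, Function.update_self]
      have : ∑ i ∈ A, Function.update T1 a s1 i = ∑ i ∈ A, T1 i :=
        Finset.sum_congr rfl fun i hi =>
          Function.update_of_ne (by rintro rfl; exact ha hi) _ _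
      rw [this, hT1c]; omega

lemma exists_split {ι : Type*} [Fintype ι] [DecidableEq ι] (T : ι → ℤ)
    (hT : ∀ i, 0 ≤ T i) (s : ℤ) (hs0 : 0 ≤ s) (hs1 : s ≤ ∑ i, T i) :
    ∃ T1 : ι → ℤ, (∀ i, 0 ≤ T1 i) ∧ (∀ i, T1 i ≤ T i) ∧ ∑ i, T1 i = s := by
  obtain ⟨T1, h1, h2, h3⟩ := exists_split_on Finset.univ T (fun i _ => hT i) s hs0 hs1
  exact ⟨T1, h1, fun i => h2 i (Finset.mem_univ i), h3⟩

/-- The abstract combinatorial splitting lemma. -/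
lemma batyrev_core {ι₀ ι₄ ι₁ ι₃ ι₂ : Type*}
    [Fintype ι₀] [Fintype ι₄] [Fintype ι₁] [Fintype ι₃] [Fintype ι₂]
    [DecidableEq ι₀] [DecidableEq ι₄] [DecidableEq ι₁] [DecidableEq ι₃] [DecidableEq ι₂]
    (b : ι₃ → ℤ) (c : ι₂ → ℤ) (hb : ∀ i, 0 ≤ b i) (hc : ∀ k, 0 ≤ c k)
    (K L M K' L' M' : ℤ) (h1 : 0 ≤ L) (h2 : L ≤ K) (h3 : K ≤ L + M)
    (h1' : 0 ≤ L') (h2' : L' ≤ K') (h3' : K' ≤ L' + M')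
    (V : ι₀ → ℤ) (U : ι₄ → ℤ) (Y : ι₁ → ℤ) (T : ι₃ → ℤ) (Z : ι₂ → ℤ)
    (hV : ∀ i, 0 ≤ V i) (hU : ∀ i, 0 ≤ U i) (hY : ∀ i, 0 ≤ Y i)
    (hT : ∀ i, 0 ≤ T i) (hZ : ∀ i, 0 ≤ Z i)
    (hA : ∑ i, T i + ∑ i, Z i ≤ M + M')
    (hB : ∑ i, V i + ∑ i, U i ≤ K + K' + (∑ i, b i * T i + ∑ i, c i * Z i))
    (hC : ∑ i, V i + ∑ i, Y i ≤ L + L' + (∑ i, b i * T i + ∑ i, c i * Z i) + ∑ i, T i) :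
    ∃ (V1 : ι₀ → ℤ) (U1 : ι₄ → ℤ) (Y1 : ι₁ → ℤ) (T1 : ι₃ → ℤ) (Z1 : ι₂ → ℤ),
      (∀ i, 0 ≤ V1 i) ∧ (∀ i, V1 i ≤ V i) ∧
      (∀ i, 0 ≤ U1 i) ∧ (∀ i, U1 i ≤ U i) ∧
      (∀ i, 0 ≤ Y1 i) ∧ (∀ i, Y1 i ≤ Y i) ∧
      (∀ i, 0 ≤ T1 i) ∧ (∀ i, T1 i ≤ T i) ∧
      (∀ i, 0 ≤ Z1 i) ∧ (∀ i, Z1 i ≤ Z i) ∧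
      (∑ i, T1 i + ∑ i, Z1 i ≤ M) ∧
      ((∑ i, T i - ∑ i, T1 i) + (∑ i, Z i - ∑ i, Z1 i) ≤ M') ∧
      (∑ i, V1 i + ∑ i, U1 i ≤ K + (∑ i, b i * T1 i + ∑ i, c i * Z1 i)) ∧
      ((∑ i, V i - ∑ i, V1 i) + (∑ i, U i - ∑ i, U1 i) ≤
        K' + ((∑ i, b i * T i - ∑ i, b i * T1 i) + (∑ i, c i * Z i - ∑ i, c i * Z1 i))) ∧
      (∑ i, V1 i + ∑ i, Y1 i ≤ L + (∑ i, b i * T1 i + ∑ i, c i * Z1 i) + ∑ i, T1 i) ∧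
      ((∑ i, V i - ∑ i, V1 i) + (∑ i, Y i - ∑ i, Y1 i) ≤
        L' + ((∑ i, b i * T i - ∑ i, b i * T1 i) + (∑ i, c i * Z i - ∑ i, c i * Z1 i))
          + (∑ i, T i - ∑ i, T1 i)) := by
  have hsT : 0 ≤ ∑ i, T i := Finset.sum_nonneg fun i _ => hT i
  have hsZ : 0 ≤ ∑ i, Z i := Finset.sum_nonneg fun i _ => hZ i
  have hsV : 0 ≤ ∑ i, V i := Finset.sum_nonneg fun i _ => hV i
  have hsU : 0 ≤ ∑ i, U i := Finset.sum_nonneg fun i _ => hU i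
  have hsY : 0 ≤ ∑ i, Y i := Finset.sum_nonneg fun i _ => hY i
  have hbT : 0 ≤ ∑ i, b i * T i :=
    Finset.sum_nonneg fun i _ => mul_nonneg (hb i) (hT i)
  have hcZ : 0 ≤ ∑ i, c i * Z i :=
    Finset.sum_nonneg fun i _ => mul_nonneg (hc i) (hZ i)
  set sT := ∑ i, T i
  set sZ := ∑ i, Z i
  set sV := ∑ i, V i
  set sU := ∑ i, U i
  set sY := ∑ i, Y i
  set bT := ∑ i, b i * T i
  set cZ := ∑ i, c i * Z i
  set s := max (max 0 (sV - K' - L - bT - cZ)) (sT - M') with hsdef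
  have hs0 : 0 ≤ s := by omega
  have hssT : s ≤ sT := by omega
  have hsD' : sV - K - L' - bT - cZ ≤ sT - s := by omega
  set w := max 0 (sT + sZ - M' - s) with hwdef
  have hw0 : 0 ≤ w := by omega
  have hwsZ : w ≤ sZ := by omega
  have hswM : s + w ≤ M := by omega
  have hswM' : (sT - s) + (sZ - w) ≤ M' := by omega
  obtain ⟨T1, hT1a, hT1b, hT1c⟩ := exists_split T hT s hs0 hssT
  obtain ⟨Z1, hZ1a, hZ1b, hZ1c⟩ := exists_split Z hZ w hw0 hwsZ
  have hbT1a : 0 ≤ ∑ i, b i * T1 i :=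
    Finset.sum_nonneg fun i _ => mul_nonneg (hb i) (hT1a i)
  have hbT1b : ∑ i, b i * T1 i ≤ bT :=
    Finset.sum_le_sum fun i _ => mul_le_mul_of_nonneg_left (hT1b i) (hb i)
  have hcZ1a : 0 ≤ ∑ i, c i * Z1 i :=
    Finset.sum_nonneg fun i _ => mul_nonneg (hc i) (hZ1a i)
  have hcZ1b : ∑ i, c i * Z1 i ≤ cZ :=
    Finset.sum_le_sum fun i _ => mul_le_mul_of_nonneg_left (hZ1b i) (hc i)
  set bT1 := ∑ i, b i * T1 i with hbT1def
  set cZ1 := ∑ i, c i * Z1 i with hcZ1def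
  set P1 := K + bT1 + cZ1 with hP1
  set P2 := K' + (bT - bT1) + (cZ - cZ1) with hP2
  set Q1 := L + bT1 + cZ1 + s with hQ1
  set Q2 := L' + (bT - bT1) + (cZ - cZ1) + (sT - s) with hQ2
  set σV := max 0 (max (sV - P2) (sV - Q2)) with hσV
  have hσV0 : 0 ≤ σV := by omega
  have hσVsV : σV ≤ sV := by omega
  set σU := max 0 (sV + sU - P2 - σV) with hσU
  have hσU0 : 0 ≤ σU := by omega
  have hσUsU : σU ≤ sU := by omega
  set σY := max 0 (sV + sY - Q2 - σV) with hσY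
  have hσY0 : 0 ≤ σY := by omega
  have hσYsY : σY ≤ sY := by omega
  obtain ⟨V1, hV1a, hV1b, hV1c⟩ := exists_split V hV σV hσV0 hσVsV
  obtain ⟨U1, hU1a, hU1b, hU1c⟩ := exists_split U hU σU hσU0 hσUsU
  obtain ⟨Y1, hY1a, hY1b, hY1c⟩ := exists_split Y hY σY hσY0 hσYsY
  refine ⟨V1, U1, Y1, T1, Z1, hV1a, hV1b, hU1a, hU1b, hY1a, hY1b, hT1a, hT1b,
    hZ1a, hZ1b, ?_, ?_, ?_, ?_, ?_, ?_⟩ <;>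
    simp only [hT1c, hZ1c, hV1c, hU1c, hY1c, ← hbT1def, ← hcZ1def] <;> omega

end Aux

/-! ### Row sums of the Batyrev matrix -/

section RowSums

variable {p0 p1 p2 p3 p4 : ℕ} (b : Fin p3 → ℤ) (c : Fin (p2 - 1) → ℤ)
  (ξ : BCol p0 p1 p2 p3 p4 → ℤ)

/-- Coordinate sums of a vector indexed by `BCol`. -/
def Sv : ℤ := ∑ i : Fin p0, ξ (.inl (.inl i))
def Su : ℤ := ∑ k : Fin (p4 - 1), ξ (.inl (.inr (.inl k)))
def Sy : ℤ := ∑ k : Fin (p1 - 1), ξ (.inl (.inr (.inr k)))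
def St : ℤ := ∑ i : Fin p3, ξ (.inr (.inl i))
def Sz : ℤ := ∑ k : Fin (p2 - 1), ξ (.inr (.inr k))
def Bt : ℤ := ∑ i : Fin p3, b i * ξ (.inr (.inl i))
def Cz : ℤ := ∑ k : Fin (p2 - 1), c k * ξ (.inr (.inr k))

lemma sum_indicator_one {n : ℕ} (i : Fin n) (g : Fin n → ℤ) :
    ∑ i' : Fin n, (if (i : ℕ) = (i' : ℕ) then (1 : ℤ) else 0) * g i' = g i := by
  rw [Finset.sum_eq_single i]
  · simp
  · intro j _ hj
    rw [if_neg (fun hh => hj (Fin.ext hh.symm)), zero_mul]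
  · simp

lemma sum_indicator_succ {n : ℕ} (k : Fin (n - 1)) (g : Fin (n - 1) → ℤ) :
    ∑ k' : Fin (n - 1),
      (if ((embSucc k : Fin n) : ℕ) = 0 then (-1 : ℤ)
        else if ((embSucc k : Fin n) : ℕ) = (k' : ℕ) + 1 then 1 else 0) * g k' = g k := by
  have h0 : ((embSucc k : Fin n) : ℕ) ≠ 0 := by simp [embSucc]
  rw [Finset.sum_eq_single k]
  · rw [if_neg h0]
    simp [embSucc]
  · intro j _ hj
    rw [if_neg h0, if_neg, zero_mul]
    simp only [embSucc]
    exact fun hh => hj (Fin.ext (by omega))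
  · simp

lemma rowsum_v (i : Fin p0) :
    ∑ j, batyrevA p0 p1 p2 p3 p4 b c (.inl i) j * ξ j = ξ (.inl (.inl i)) := by
  simp only [Fintype.sum_sum_type, batyrevA]
  rw [sum_indicator_one]
  simp

lemma rowsum_u0 (j : Fin p4) (hj : (j : ℕ) = 0) :
    ∑ j', batyrevA p0 p1 p2 p3 p4 b c (.inr (.inl j)) j' * ξ j' =
      -Sv ξ - Su ξ + (Bt b ξ + Cz c ξ) := by
  simp only [Fintype.sum_sum_type, batyrevA, hj, if_true, eq_self_iff_true, if_pos]
  simp [Sv, Su, Bt, Cz, neg_mul, one_mul]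
  ring

lemma rowsum_u_succ (k : Fin (p4 - 1)) :
    ∑ j', batyrevA p0 p1 p2 p3 p4 b c (.inr (.inl (embSucc k))) j' * ξ j' =
      ξ (.inl (.inr (.inl k))) := by
  have h0 : ((embSucc k : Fin p4) : ℕ) ≠ 0 := by simp [embSucc]
  simp only [Fintype.sum_sum_type, batyrevA]
  rw [sum_indicator_succ]
  simp [h0]

lemma rowsum_y0 (j : Fin p1) (hj : (j : ℕ) = 0) :
    ∑ j', batyrevA p0 p1 p2 p3 p4 b c (.inr (.inr (.inl j))) j' * ξ j' =
      -Sv ξ - Sy ξ + (Bt b ξ + St ξ + Cz c ξ) := by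
  simp only [Fintype.sum_sum_type, batyrevA, hj, if_true, eq_self_iff_true, if_pos]
  simp [Sv, Sy, Bt, St, Cz, neg_mul, add_mul, one_mul, Finset.sum_add_distrib]
  ring

lemma rowsum_y_succ (k : Fin (p1 - 1)) :
    ∑ j', batyrevA p0 p1 p2 p3 p4 b c (.inr (.inr (.inl (embSucc k)))) j' * ξ j' =
      ξ (.inl (.inr (.inr k))) := by
  have h0 : ((embSucc k : Fin p1) : ℕ) ≠ 0 := by simp [embSucc]
  simp only [Fintype.sum_sum_type, batyrevA]
  rw [sum_indicator_succ]
  simp [h0]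

lemma rowsum_t (i : Fin p3) :
    ∑ j, batyrevA p0 p1 p2 p3 p4 b c (.inr (.inr (.inr (.inl i)))) j * ξ j =
      ξ (.inr (.inl i)) := by
  simp only [Fintype.sum_sum_type, batyrevA]
  rw [sum_indicator_one]
  simp

lemma rowsum_z0 (j : Fin p2) (hj : (j : ℕ) = 0) :
    ∑ j', batyrevA p0 p1 p2 p3 p4 b c (.inr (.inr (.inr (.inr j)))) j' * ξ j' =
      -St ξ - Sz ξ := by
  simp only [Fintype.sum_sum_type, batyrevA, hj, if_true, eq_self_iff_true, if_pos]
  simp [St, Sz, neg_mul]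
  ring

lemma rowsum_z_succ (k : Fin (p2 - 1)) :
    ∑ j', batyrevA p0 p1 p2 p3 p4 b c (.inr (.inr (.inr (.inr (embSucc k))))) j' * ξ j' =
      ξ (.inr (.inr k)) := by
  have h0 : ((embSucc k : Fin p2) : ℕ) ≠ 0 := by simp [embSucc]
  simp only [Fintype.sum_sum_type, batyrevA]
  rw [sum_indicator_succ]
  simp [h0]

end RowSums

/-! ### Integer membership -/

/-- Integer-level membership in `P(A,h)`. -/
def memZ (p0 p1 p2 p3 p4 : ℕ) (b : Fin p3 → ℤ) (c : Fin (p2 - 1) → ℤ)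
    (h : BRow p0 p1 p2 p3 p4 → ℤ) (ξ : BCol p0 p1 p2 p3 p4 → ℤ) : Prop :=
  ∀ r, -h r ≤ ∑ j, batyrevA p0 p1 p2 p3 p4 b c r j * ξ j

lemma memZ_iff (p0 p1 p2 p3 p4 : ℕ) (hp1 : 1 ≤ p1) (hp2 : 1 ≤ p2) (hp4 : 1 ≤ p4)
    (b : Fin p3 → ℤ) (c : Fin (p2 - 1) → ℤ)
    (h : BRow p0 p1 p2 p3 p4 → ℤ) (ξ : BCol p0 p1 p2 p3 p4 → ℤ) :
    memZ p0 p1 p2 p3 p4 b c h ξ ↔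
      ((∀ i : Fin p0, -h (.inl i) ≤ ξ (.inl (.inl i))) ∧
      (∀ k : Fin (p4 - 1), -h (.inr (.inl (embSucc k))) ≤ ξ (.inl (.inr (.inl k)))) ∧
      (∀ k : Fin (p1 - 1), -h (.inr (.inr (.inl (embSucc k)))) ≤ ξ (.inl (.inr (.inr k)))) ∧
      (∀ i : Fin p3, -h (.inr (.inr (.inr (.inl i)))) ≤ ξ (.inr (.inl i))) ∧
      (∀ k : Fin (p2 - 1), -h (.inr (.inr (.inr (.inr (embSucc k))))) ≤ ξ (.inr (.inr k))) ∧
      (-h (.inr (.inl ⟨0, hp4⟩)) ≤ -Sv ξ - Su ξ + (Bt b ξ + Cz c ξ)) ∧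
      (-h (.inr (.inr (.inl ⟨0, hp1⟩))) ≤ -Sv ξ - Sy ξ + (Bt b ξ + St ξ + Cz c ξ)) ∧
      (-h (.inr (.inr (.inr (.inr ⟨0, hp2⟩)))) ≤ -St ξ - Sz ξ)) := by
  constructor
  · intro H
    refine ⟨fun i => ?_, fun k => ?_, fun k => ?_, fun i => ?_, fun k => ?_, ?_, ?_, ?_⟩
    · have := H (.inl i); rwa [rowsum_v] at this
    · have := H (.inr (.inl (embSucc k))); rwa [rowsum_u_succ] at this
    · have := H (.inr (.inr (.inl (embSucc k)))); rwa [rowsum_y_succ] at this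
    · have := H (.inr (.inr (.inr (.inl i)))); rwa [rowsum_t] at this
    · have := H (.inr (.inr (.inr (.inr (embSucc k))))); rwa [rowsum_z_succ] at this
    · have := H (.inr (.inl ⟨0, hp4⟩)); rwa [rowsum_u0 b c ξ _ rfl] at this
    · have := H (.inr (.inr (.inl ⟨0, hp1⟩))); rwa [rowsum_y0 b c ξ _ rfl] at this
    · have := H (.inr (.inr (.inr (.inr ⟨0, hp2⟩)))); rwa [rowsum_z0 b c ξ _ rfl] at this
  · rintro ⟨H1, H2, H3, H4, H5, H6, H7, H8⟩ r
    rcases r with i | j | j | i | j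
    · rw [rowsum_v]; exact H1 i
    · by_cases hj : (j : ℕ) = 0
      · have hj' : j = ⟨0, hp4⟩ := Fin.ext hj
        rw [rowsum_u0 b c ξ j hj, hj']; exact H6
      · obtain ⟨k, rfl⟩ : ∃ k : Fin (p4 - 1), j = embSucc k :=
          ⟨⟨(j : ℕ) - 1, by have := j.isLt; omega⟩, Fin.ext (by simp [embSucc]; omega)⟩
        rw [rowsum_u_succ]; exact H2 k
    · by_cases hj : (j : ℕ) = 0
      · have hj' : j = ⟨0, hp1⟩ := Fin.ext hj
        rw [rowsum_y0 b c ξ j hj, hj']; exact H7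
      · obtain ⟨k, rfl⟩ : ∃ k : Fin (p1 - 1), j = embSucc k :=
          ⟨⟨(j : ℕ) - 1, by have := j.isLt; omega⟩, Fin.ext (by simp [embSucc]; omega)⟩
        rw [rowsum_y_succ]; exact H3 k
    · rw [rowsum_t]; exact H4 i
    · by_cases hj : (j : ℕ) = 0
      · have hj' : j = ⟨0, hp2⟩ := Fin.ext hj
        rw [rowsum_z0 b c ξ j hj, hj']; exact H8
      · obtain ⟨k, rfl⟩ : ∃ k : Fin (p2 - 1), j = embSucc k :=
          ⟨⟨(j : ℕ) - 1, by have := j.isLt; omega⟩, Fin.ext (by simp [embSucc]; omega)⟩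
        rw [rowsum_z_succ]; exact H5 k

lemma memZ_polyP (p0 p1 p2 p3 p4 : ℕ) (b : Fin p3 → ℤ) (c : Fin (p2 - 1) → ℤ)
    (h : BRow p0 p1 p2 p3 p4 → ℤ) (ξ : BCol p0 p1 p2 p3 p4 → ℤ)
    (H : memZ p0 p1 p2 p3 p4 b c h ξ) :
    (fun j => (ξ j : ℝ)) ∈ polyP (batyrevA p0 p1 p2 p3 p4 b c) h := by
  simp only [polyP, Set.mem_setOf_eq]
  intro r
  have h1 := H r
  have h2 : ((∑ j, batyrevA p0 p1 p2 p3 p4 b c r j * ξ j : ℤ) : ℝ) =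
      ∑ j, (batyrevA p0 p1 p2 p3 p4 b c r j : ℝ) * (ξ j : ℝ) := by
    push_cast
    rfl
  rw [← h2]
  exact_mod_cast h1

set_option maxHeartbeats 2000000 in
/-- Integer points of `P(A, h + h')` split. -/
lemma main_split (p0 p1 p2 p3 p4 : ℕ)
    (hp0 : 1 ≤ p0) (hp1 : 1 ≤ p1) (hp2 : 1 ≤ p2) (hp3 : 1 ≤ p3) (hp4 : 1 ≤ p4)
    (b : Fin p3 → ℤ) (c : Fin (p2 - 1) → ℤ)
    (hb : ∀ i, 0 ≤ b i) (hc : ∀ k, 0 ≤ c k)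
    (h h' : BRow p0 p1 p2 p3 p4 → ℤ)
    (hconv : batyrevConvex p0 p1 p2 p3 p4 b c h)
    (hconv' : batyrevConvex p0 p1 p2 p3 p4 b c h')
    (ξ : BCol p0 p1 p2 p3 p4 → ℤ)
    (hξ : memZ p0 p1 p2 p3 p4 b c (fun r => h r + h' r) ξ) :
    ∃ ξ1 ξ2 : BCol p0 p1 p2 p3 p4 → ℤ,
      (∀ j, ξ j = ξ1 j + ξ2 j) ∧ memZ p0 p1 p2 p3 p4 b c h ξ1 ∧
        memZ p0 p1 p2 p3 p4 b c h' ξ2 := by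
  obtain ⟨c1, c2, c3, c4, c5⟩ := hconv
  obtain ⟨c1', c2', c3', c4', c5'⟩ := hconv'
  rw [memZ_iff p0 p1 p2 p3 p4 hp1 hp2 hp4 b c] at hξ
  obtain ⟨q1, q2, q3, q4, q5, q6, q7, q8⟩ := hξ
  -- splitting sums over `Fin p` at the first index
  have eb : ∀ g : BRow p0 p1 p2 p3 p4 → ℤ,
      ∑ i, (b i + 1) * g (.inr (.inr (.inr (.inl i)))) =
        ∑ i, b i * g (.inr (.inr (.inr (.inl i)))) + ∑ i, g (.inr (.inr (.inr (.inl i)))) := by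
    intro g; rw [← Finset.sum_add_distrib]
    exact Finset.sum_congr rfl fun i _ => by ring
  have eu : ∑ j : Fin p4, h (.inr (.inl j)) =
      h (.inr (.inl ⟨0, hp4⟩)) + ∑ k : Fin (p4 - 1), h (.inr (.inl (embSucc k))) :=
    sum_fin_pos hp4 _
  have eu' : ∑ j : Fin p4, h' (.inr (.inl j)) =
      h' (.inr (.inl ⟨0, hp4⟩)) + ∑ k : Fin (p4 - 1), h' (.inr (.inl (embSucc k))) :=
    sum_fin_pos hp4 _
  have ey : ∑ j : Fin p1, h (.inr (.inr (.inl j))) =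
      h (.inr (.inr (.inl ⟨0, hp1⟩))) +
        ∑ k : Fin (p1 - 1), h (.inr (.inr (.inl (embSucc k)))) :=
    sum_fin_pos hp1 _
  have ey' : ∑ j : Fin p1, h' (.inr (.inr (.inl j))) =
      h' (.inr (.inr (.inl ⟨0, hp1⟩))) +
        ∑ k : Fin (p1 - 1), h' (.inr (.inr (.inl (embSucc k)))) :=
    sum_fin_pos hp1 _
  have ez : ∑ j : Fin p2, h (.inr (.inr (.inr (.inr j)))) =
      h (.inr (.inr (.inr (.inr ⟨0, hp2⟩)))) +
        ∑ k : Fin (p2 - 1), h (.inr (.inr (.inr (.inr (embSucc k))))) :=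
    sum_fin_pos hp2 _
  have ez' : ∑ j : Fin p2, h' (.inr (.inr (.inr (.inr j)))) =
      h' (.inr (.inr (.inr (.inr ⟨0, hp2⟩)))) +
        ∑ k : Fin (p2 - 1), h' (.inr (.inr (.inr (.inr (embSucc k))))) :=
    sum_fin_pos hp2 _
  -- translated coordinate sums
  have eV : ∑ i : Fin p0, (ξ (.inl (.inl i)) + (h (.inl i) + h' (.inl i))) =
      Sv ξ + (∑ i : Fin p0, h (.inl i) + ∑ i : Fin p0, h' (.inl i)) := by
    simp [Sv, Finset.sum_add_distrib]
  have eU : ∑ k : Fin (p4 - 1), (ξ (.inl (.inr (.inl k))) +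
        (h (.inr (.inl (embSucc k))) + h' (.inr (.inl (embSucc k))))) =
      Su ξ + (∑ k : Fin (p4 - 1), h (.inr (.inl (embSucc k))) +
        ∑ k : Fin (p4 - 1), h' (.inr (.inl (embSucc k)))) := by
    simp [Su, Finset.sum_add_distrib]
  have eY : ∑ k : Fin (p1 - 1), (ξ (.inl (.inr (.inr k))) +
        (h (.inr (.inr (.inl (embSucc k)))) + h' (.inr (.inr (.inl (embSucc k)))))) =
      Sy ξ + (∑ k : Fin (p1 - 1), h (.inr (.inr (.inl (embSucc k)))) +
        ∑ k : Fin (p1 - 1), h' (.inr (.inr (.inl (embSucc k))))) := by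
    simp [Sy, Finset.sum_add_distrib]
  have eT : ∑ i : Fin p3, (ξ (.inr (.inl i)) +
        (h (.inr (.inr (.inr (.inl i)))) + h' (.inr (.inr (.inr (.inl i)))))) =
      St ξ + (∑ i : Fin p3, h (.inr (.inr (.inr (.inl i)))) +
        ∑ i : Fin p3, h' (.inr (.inr (.inr (.inl i))))) := by
    simp [St, Finset.sum_add_distrib]
  have eZ : ∑ k : Fin (p2 - 1), (ξ (.inr (.inr k)) +
        (h (.inr (.inr (.inr (.inr (embSucc k))))) + h' (.inr (.inr (.inr (.inr (embSucc k))))))) =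
      Sz ξ + (∑ k : Fin (p2 - 1), h (.inr (.inr (.inr (.inr (embSucc k))))) +
        ∑ k : Fin (p2 - 1), h' (.inr (.inr (.inr (.inr (embSucc k)))))) := by
    simp [Sz, Finset.sum_add_distrib]
  have ebT : ∑ i : Fin p3, b i * (ξ (.inr (.inl i)) +
        (h (.inr (.inr (.inr (.inl i)))) + h' (.inr (.inr (.inr (.inl i)))))) =
      Bt b ξ + (∑ i : Fin p3, b i * h (.inr (.inr (.inr (.inl i)))) +
        ∑ i : Fin p3, b i * h' (.inr (.inr (.inr (.inl i))))) := by
    simp [Bt, mul_add, Finset.sum_add_distrib]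
  have ecZ : ∑ k : Fin (p2 - 1), c k * (ξ (.inr (.inr k)) +
        (h (.inr (.inr (.inr (.inr (embSucc k))))) + h' (.inr (.inr (.inr (.inr (embSucc k))))))) =
      Cz c ξ + (∑ k : Fin (p2 - 1), c k * h (.inr (.inr (.inr (.inr (embSucc k))))) +
        ∑ k : Fin (p2 - 1), c k * h' (.inr (.inr (.inr (.inr (embSucc k)))))) := by
    simp [Cz, mul_add, Finset.sum_add_distrib]
  obtain ⟨V1, U1, Y1, T1, Z1, hV1a, hV1b, hU1a, hU1b, hY1a, hY1b, hT1a, hT1b,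
      hZ1a, hZ1b, m1, m2, m3, m4, m5, m6⟩ :=
    batyrev_core b c hb hc
      ((∑ j : Fin p4, h (.inr (.inl j))) + ∑ i : Fin p0, h (.inl i)
        - ∑ i : Fin p3, b i * h (.inr (.inr (.inr (.inl i))))
        - ∑ k : Fin (p2 - 1), c k * h (.inr (.inr (.inr (.inr (embSucc k))))))
      ((∑ i : Fin p0, h (.inl i)) + ∑ j : Fin p1, h (.inr (.inr (.inl j)))
        - ∑ i : Fin p3, b i * h (.inr (.inr (.inr (.inl i))))
        - ∑ i : Fin p3, h (.inr (.inr (.inr (.inl i))))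
        - ∑ k : Fin (p2 - 1), c k * h (.inr (.inr (.inr (.inr (embSucc k))))))
      ((∑ j : Fin p2, h (.inr (.inr (.inr (.inr j))))) +
        ∑ i : Fin p3, h (.inr (.inr (.inr (.inl i)))))
      ((∑ j : Fin p4, h' (.inr (.inl j))) + ∑ i : Fin p0, h' (.inl i)
        - ∑ i : Fin p3, b i * h' (.inr (.inr (.inr (.inl i))))
        - ∑ k : Fin (p2 - 1), c k * h' (.inr (.inr (.inr (.inr (embSucc k))))))
      ((∑ i : Fin p0, h' (.inl i)) + ∑ j : Fin p1, h' (.inr (.inr (.inl j)))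
        - ∑ i : Fin p3, b i * h' (.inr (.inr (.inr (.inl i))))
        - ∑ i : Fin p3, h' (.inr (.inr (.inr (.inl i))))
        - ∑ k : Fin (p2 - 1), c k * h' (.inr (.inr (.inr (.inr (embSucc k))))))
      ((∑ j : Fin p2, h' (.inr (.inr (.inr (.inr j))))) +
        ∑ i : Fin p3, h' (.inr (.inr (.inr (.inl i)))))
      (by have := eb h; linarith [c1])
      (by linarith [c4])
      (by linarith [c2])
      (by have := eb h'; linarith [c1'])
      (by linarith [c4'])
      (by linarith [c2'])
      (fun i => ξ (.inl (.inl i)) + (h (.inl i) + h' (.inl i)))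
      (fun k => ξ (.inl (.inr (.inl k))) +
        (h (.inr (.inl (embSucc k))) + h' (.inr (.inl (embSucc k)))))
      (fun k => ξ (.inl (.inr (.inr k))) +
        (h (.inr (.inr (.inl (embSucc k)))) + h' (.inr (.inr (.inl (embSucc k))))))
      (fun i => ξ (.inr (.inl i)) +
        (h (.inr (.inr (.inr (.inl i)))) + h' (.inr (.inr (.inr (.inl i))))))
      (fun k => ξ (.inr (.inr k)) +
        (h (.inr (.inr (.inr (.inr (embSucc k))))) + h' (.inr (.inr (.inr (.inr (embSucc k)))))))
      (fun i => by
        show (0:ℤ) ≤ ξ (.inl (.inl i)) + (h (.inl i) + h' (.inl i))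
        linarith [q1 i])
      (fun k => by
        show (0:ℤ) ≤ ξ (.inl (.inr (.inl k))) +
          (h (.inr (.inl (embSucc k))) + h' (.inr (.inl (embSucc k))))
        linarith [q2 k])
      (fun k => by
        show (0:ℤ) ≤ ξ (.inl (.inr (.inr k))) +
          (h (.inr (.inr (.inl (embSucc k)))) + h' (.inr (.inr (.inl (embSucc k)))))
        linarith [q3 k])
      (fun i => by
        show (0:ℤ) ≤ ξ (.inr (.inl i)) +
          (h (.inr (.inr (.inr (.inl i)))) + h' (.inr (.inr (.inr (.inl i)))))
        linarith [q4 i])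
      (fun k => by
        show (0:ℤ) ≤ ξ (.inr (.inr k)) +
          (h (.inr (.inr (.inr (.inr (embSucc k))))) + h' (.inr (.inr (.inr (.inr (embSucc k))))))
        linarith [q5 k])
      (by rw [eT, eZ]; linarith [q8, ez, ez'])
      (by rw [eV, eU, ebT, ecZ]; linarith [q6, eu, eu'])
      (by rw [eV, eY, ebT, ecZ, eT]; linarith [q7, ey, ey'])
  try simp only at hV1b hU1b hY1b hT1b hZ1b
  try simp only at m1
  try simp only at m2
  try simp only at m3
  try simp only at m4
  try simp only at m5
  try simp only at m6
  set ξ1 : BCol p0 p1 p2 p3 p4 → ℤ :=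
    Sum.elim
      (Sum.elim (fun i => V1 i - h (.inl i))
        (Sum.elim (fun k => U1 k - h (.inr (.inl (embSucc k))))
          (fun k => Y1 k - h (.inr (.inr (.inl (embSucc k)))))))
      (Sum.elim (fun i => T1 i - h (.inr (.inr (.inr (.inl i)))))
        (fun k => Z1 k - h (.inr (.inr (.inr (.inr (embSucc k))))))) with hξ1def
  -- sums for ξ1
  have eSv1 : Sv ξ1 = ∑ i, V1 i - ∑ i : Fin p0, h (.inl i) := by
    simp [Sv, hξ1def, Finset.sum_sub_distrib]
  have eSu1 : Su ξ1 = ∑ k, U1 k - ∑ k : Fin (p4 - 1), h (.inr (.inl (embSucc k))) := by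
    simp [Su, hξ1def, Finset.sum_sub_distrib]
  have eSy1 : Sy ξ1 = ∑ k, Y1 k - ∑ k : Fin (p1 - 1), h (.inr (.inr (.inl (embSucc k)))) := by
    simp [Sy, hξ1def, Finset.sum_sub_distrib]
  have eSt1 : St ξ1 = ∑ i, T1 i - ∑ i : Fin p3, h (.inr (.inr (.inr (.inl i)))) := by
    simp [St, hξ1def, Finset.sum_sub_distrib]
  have eSz1 : Sz ξ1 = ∑ k, Z1 k -
      ∑ k : Fin (p2 - 1), h (.inr (.inr (.inr (.inr (embSucc k))))) := by
    simp [Sz, hξ1def, Finset.sum_sub_distrib]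
  have eBt1 : Bt b ξ1 = ∑ i, b i * T1 i -
      ∑ i : Fin p3, b i * h (.inr (.inr (.inr (.inl i)))) := by
    simp [Bt, hξ1def, mul_sub, Finset.sum_sub_distrib]
  have eCz1 : Cz c ξ1 = ∑ k, c k * Z1 k -
      ∑ k : Fin (p2 - 1), c k * h (.inr (.inr (.inr (.inr (embSucc k))))) := by
    simp [Cz, hξ1def, mul_sub, Finset.sum_sub_distrib]
  -- sums for ξ2
  have eSv2 : Sv (fun j => ξ j - ξ1 j) = Sv ξ - Sv ξ1 := by
    simp [Sv, Finset.sum_sub_distrib]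
  have eSu2 : Su (fun j => ξ j - ξ1 j) = Su ξ - Su ξ1 := by
    simp [Su, Finset.sum_sub_distrib]
  have eSy2 : Sy (fun j => ξ j - ξ1 j) = Sy ξ - Sy ξ1 := by
    simp [Sy, Finset.sum_sub_distrib]
  have eSt2 : St (fun j => ξ j - ξ1 j) = St ξ - St ξ1 := by
    simp [St, Finset.sum_sub_distrib]
  have eSz2 : Sz (fun j => ξ j - ξ1 j) = Sz ξ - Sz ξ1 := by
    simp [Sz, Finset.sum_sub_distrib]
  have eBt2 : Bt b (fun j => ξ j - ξ1 j) = Bt b ξ - Bt b ξ1 := by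
    simp [Bt, mul_sub, Finset.sum_sub_distrib]
  have eCz2 : Cz c (fun j => ξ j - ξ1 j) = Cz c ξ - Cz c ξ1 := by
    simp [Cz, mul_sub, Finset.sum_sub_distrib]
  refine ⟨ξ1, fun j => ξ j - ξ1 j, fun j => by ring, ?_, ?_⟩
  · rw [memZ_iff p0 p1 p2 p3 p4 hp1 hp2 hp4 b c]
    refine ⟨fun i => ?_, fun k => ?_, fun k => ?_, fun i => ?_, fun k => ?_, ?_, ?_, ?_⟩
    · simp only [hξ1def, Sum.elim_inl]; linarith [hV1a i]
    · simp only [hξ1def, Sum.elim_inl, Sum.elim_inr]; linarith [hU1a k]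
    · simp only [hξ1def, Sum.elim_inl, Sum.elim_inr]; linarith [hY1a k]
    · simp only [hξ1def, Sum.elim_inr, Sum.elim_inl]; linarith [hT1a i]
    · simp only [hξ1def, Sum.elim_inr]; linarith [hZ1a k]
    · rw [eSv1, eSu1, eBt1, eCz1]; linarith [m3, eu]
    · rw [eSv1, eSy1, eBt1, eCz1, eSt1]; linarith [m5, ey]
    · rw [eSt1, eSz1]; linarith [m1, ez]
  · rw [memZ_iff p0 p1 p2 p3 p4 hp1 hp2 hp4 b c]
    refine ⟨fun i => ?_, fun k => ?_, fun k => ?_, fun i => ?_, fun k => ?_, ?_, ?_, ?_⟩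
    · simp only [hξ1def, Sum.elim_inl]; linarith [hV1b i]
    · simp only [hξ1def, Sum.elim_inl, Sum.elim_inr]; linarith [hU1b k]
    · simp only [hξ1def, Sum.elim_inl, Sum.elim_inr]; linarith [hY1b k]
    · simp only [hξ1def, Sum.elim_inr, Sum.elim_inl]; linarith [hT1b i]
    · simp only [hξ1def, Sum.elim_inr]; linarith [hZ1b k]
    · rw [eSv2, eSu2, eBt2, eCz2, eSv1, eSu1, eBt1, eCz1]
      linarith [m4, eu', eV, eU, ebT, ecZ]
    · rw [eSv2, eSy2, eBt2, eCz2, eSt2, eSv1, eSy1, eBt1, eCz1, eSt1]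
      linarith [m6, ey', eV, eY, ebT, ecZ, eT]
    · rw [eSt2, eSz2, eSt1, eSz1]
      linarith [m2, ez', eT, eZ]
/-- If `h, h'` satisfy the five convexity inequalities for the
Batyrev matrix `A`, then `(P(A,h), P(A,h'))` has the integer decomposition property. -/
theorem batyrev_IDP_of_convex (p0 p1 p2 p3 p4 : ℕ)
    (hp0 : 1 ≤ p0) (hp1 : 1 ≤ p1) (hp2 : 1 ≤ p2) (hp3 : 1 ≤ p3) (hp4 : 1 ≤ p4)
    (b : Fin p3 → ℤ) (c : Fin (p2 - 1) → ℤ)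
    (hb : ∀ i, 0 ≤ b i) (hc : ∀ k, 0 ≤ c k)
    (h h' : BRow p0 p1 p2 p3 p4 → ℤ)
    (hconv : batyrevConvex p0 p1 p2 p3 p4 b c h)
    (hconv' : batyrevConvex p0 p1 p2 p3 p4 b c h') :
    (polyP (batyrevA p0 p1 p2 p3 p4 b c) h ∩ intZ) +
      (polyP (batyrevA p0 p1 p2 p3 p4 b c) h' ∩ intZ) =
    (polyP (batyrevA p0 p1 p2 p3 p4 b c) h +
      polyP (batyrevA p0 p1 p2 p3 p4 b c) h') ∩ intZ := by
  ext x
  simp only [Set.mem_add, Set.mem_inter_iff, intZ, Set.mem_setOf_eq]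
  constructor
  · rintro ⟨a, ⟨ha, haZ⟩, a', ⟨ha', haZ'⟩, rfl⟩
    refine ⟨⟨a, ha, a', ha', rfl⟩, ?_⟩
    intro j
    obtain ⟨k, hk⟩ := haZ j
    obtain ⟨k', hk'⟩ := haZ' j
    exact ⟨k + k', by simp [Pi.add_apply, hk, hk']⟩
  · rintro ⟨⟨a, ha, a', ha', hsum⟩, hxZ⟩
    choose ξ hξval using hxZ
    have hxfun : x = fun j => ((ξ j : ℤ) : ℝ) := funext hξval
    have hmem : memZ p0 p1 p2 p3 p4 b c (fun r => h r + h' r) ξ := by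
      intro r
      have h1 := ha r
      have h2 := ha' r
      have hadd : ∑ j, (batyrevA p0 p1 p2 p3 p4 b c r j : ℝ) * x j =
          ∑ j, (batyrevA p0 p1 p2 p3 p4 b c r j : ℝ) * a j +
            ∑ j, (batyrevA p0 p1 p2 p3 p4 b c r j : ℝ) * a' j := by
        rw [← Finset.sum_add_distrib]
        refine Finset.sum_congr rfl fun j _ => ?_
        have hx : x j = a j + a' j := by rw [← hsum]; rfl
        rw [hx]; ring
      have key : -(((h r : ℤ) : ℝ) + ((h' r : ℤ) : ℝ)) ≤
          ∑ j, (batyrevA p0 p1 p2 p3 p4 b c r j : ℝ) * x j := by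
        rw [hadd]; linarith
      rw [hxfun] at key
      have hcast : ∑ j, (batyrevA p0 p1 p2 p3 p4 b c r j : ℝ) * ((ξ j : ℤ) : ℝ) =
          ((∑ j, batyrevA p0 p1 p2 p3 p4 b c r j * ξ j : ℤ) : ℝ) := by
        push_cast; rfl
      rw [hcast] at key
      exact_mod_cast key
    obtain ⟨ξ1, ξ2, hsplit, hm1, hm2⟩ := main_split p0 p1 p2 p3 p4 hp0 hp1 hp2 hp3 hp4
      b c hb hc h h' hconv hconv' ξ hmem
    refine ⟨fun j => ((ξ1 j : ℤ) : ℝ),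
      ⟨memZ_polyP p0 p1 p2 p3 p4 b c h ξ1 hm1, fun j => ⟨ξ1 j, rfl⟩⟩,
      fun j => ((ξ2 j : ℤ) : ℝ),
      ⟨memZ_polyP p0 p1 p2 p3 p4 b c h' ξ2 hm2, fun j => ⟨ξ2 j, rfl⟩⟩, ?_⟩
    funext j
    show (ξ1 j : ℝ) + (ξ2 j : ℝ) = x j
    rw [hξval j]
    exact_mod_cast (hsplit j).symm
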